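/- The number of (H,H)-double cosets of the Weyl group W of E₈ with respect to the stabilizer H of the root θ equals 5; that is, the double coset space H\W/H has exactly 5 elements. -/

import Mathlib

open scoped BigOperators RealInnerProductSpace

noncomputable section

abbrev E8Space : Type := EuclideanSpace ℝ (Fin 8)

/-- The E₈ root system: vectors of square-norm 2 whose coordinates are either all
integers or all half-integers, with even coordinate sum. -/
def E8Delta : Set E8Space :=
  {v | ⟪v, v⟫ = 2 ∧
    ((∀ i : Fin 8, ∃ n : ℤ, v i = (n : ℝ)) ∨
     (∀ i : Fin 8, ∃ n : ℤ, v i = (n : ℝ) + 1 / 2)) ∧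
    ∃ m : ℤ, (∑ i : Fin 8, v i) = 2 * (m : ℝ)}

/-- The highest root θ = (0,0,0,0,0,0,1,1) of E₈. -/
def thetaE8 : E8Space := WithLp.toLp 2 (![0, 0, 0, 0, 0, 0, 1, 1] : Fin 8 → ℝ)

/-- The Weyl group of E₈: the group of invertible linear maps of ℝ⁸ generated by
the reflections `x ↦ x − ⟪x,α⟫α` in the roots `α ∈ Δ`. -/
def weylGroupE8 : Subgroup (E8Space ≃ₗ[ℝ] E8Space) :=
  Subgroup.closure
    {g : E8Space ≃ₗ[ℝ] E8Space | ∃ α ∈ E8Delta, ∀ x, g x = x - ⟪x, α⟫ • α}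

/-- The stabilizer of the highest root θ in the Weyl group of E₈. -/
def stabThetaE8 : Subgroup (E8Space ≃ₗ[ℝ] E8Space) :=
  weylGroupE8 ⊓ MulAction.stabilizer (E8Space ≃ₗ[ℝ] E8Space) thetaE8

/-! ## Integer model -/

abbrev Zv := Fin 8 → ℤ

def ofN (n : ℕ) : Zv := fun i => (↑(n / 5^(i:ℕ) % 5) : ℤ) - 2

def dotZ (a b : Zv) : ℤ := ∑ i, a i * b i

def thZ : Zv := ![0,0,0,0,0,0,2,2]

def reflZ (a r : Zv) : Zv := fun i => r i - (dotZ a r / 4) * a i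

def PmL (r : Zv) : Prop :=
  dotZ r r = 8 ∧ ((∀ i, Even (r i)) ∨ (∀ i, Odd (r i))) ∧ (4 ∣ ∑ i, r i)

instance : DecidablePred PmL := fun r => by unfold PmL; infer_instance

def Okw (a : Zv) : Prop := PmL a ∧ dotZ thZ a = 0

instance : DecidablePred Okw := fun r => by unfold Okw; infer_instance

def applyW (r : Zv) (l : List ℕ) : Zv := l.foldl (fun s a => reflZ (ofN a) s) r

lemma dotZ_comm (a b : Zv) : dotZ a b = dotZ b a := by
  unfold dotZ; exact Finset.sum_congr rfl fun i _ => mul_comm _ _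

/-- latticehood -/
def Lm (r : Zv) : Prop := ((∀ i, Even (r i)) ∨ (∀ i, Odd (r i))) ∧ (4 ∣ ∑ i, r i)

lemma sq8 {x : Zv} (hx : Lm x) : 8 ∣ dotZ x x := by
  obtain ⟨hpar | hpar, hsum⟩ := hx
  · -- even case
    choose n hn using hpar
    have hx2 : ∀ i, x i = 2 * n i := fun i => by have := hn i; omega
    have h1 : dotZ x x = 4 * ∑ i, n i * n i := by
      unfold dotZ; rw [Finset.mul_sum]; exact Finset.sum_congr rfl fun i _ => by rw [hx2 i]; ring
    have h2 : ∑ i, x i = 2 * ∑ i, n i := by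
      rw [Finset.mul_sum]; exact Finset.sum_congr rfl fun i _ => by rw [hx2 i]
    have h3 : (2:ℤ) ∣ ∑ i, n i := by omega
    have h4 : (2:ℤ) ∣ ∑ i, n i * n i := by
      have : ∀ i ∈ Finset.univ, (n i * n i) % 2 = (n i) % 2 := fun i _ => by
        have h2 : n i % 2 = 0 ∨ n i % 2 = 1 := by omega
        rcases h2 with h2 | h2 <;> rw [Int.mul_emod, h2] <;> simp
      have hmod : (∑ i, n i * n i) % 2 = (∑ i, n i) % 2 := by
        rw [Finset.sum_int_mod, Finset.sum_congr rfl this, ← Finset.sum_int_mod]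
      omega
    omega
  · -- odd case
    choose n hn using hpar
    have hx2 : ∀ i, x i = 2 * n i + 1 := fun i => hn i
    have h1 : dotZ x x = 8 * (∑ i, (n i * (n i + 1)) / 2) + 8 := by
      unfold dotZ
      have : ∀ i ∈ Finset.univ, x i * x i = 8 * ((n i * (n i + 1))/2) + 1 := fun i _ => by
        have he : Even (n i * (n i + 1)) := Int.even_mul_succ_self (n i)
        have : 2 * ((n i * (n i + 1))/2) = n i * (n i + 1) := by
          rcases he with ⟨k, hk⟩; omega
        rw [hx2 i]; nlinarith [this]
      rw [Finset.sum_congr rfl this, Finset.sum_add_distrib, ← Finset.mul_sum]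
      simp
    omega

lemma Lm_add {a b : Zv} (ha : Lm a) (hb : Lm b) : Lm (fun i => a i + b i) := by
  obtain ⟨hp1, hs1⟩ := ha
  obtain ⟨hp2, hs2⟩ := hb
  constructor
  · rcases hp1 with h1 | h1 <;> rcases hp2 with h2 | h2
    · exact Or.inl fun i => (h1 i).add (h2 i)
    · exact Or.inr fun i => by have := h1 i; have := h2 i; simp [Int.even_iff, Int.odd_iff] at *; omega
    · exact Or.inr fun i => by have := h1 i; have := h2 i; simp [Int.even_iff, Int.odd_iff] at *; omega
    · exact Or.inl fun i => by have := h1 i; have := h2 i; simp [Int.even_iff, Int.odd_iff] at *; omega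
  · rw [Finset.sum_add_distrib]; omega

lemma dot_expand (a b : Zv) :
    dotZ (fun i => a i + b i) (fun i => a i + b i) = dotZ a a + 2 * dotZ a b + dotZ b b := by
  unfold dotZ
  rw [Finset.mul_sum, ← Finset.sum_add_distrib, ← Finset.sum_add_distrib]
  exact Finset.sum_congr rfl fun i _ => by ring

lemma dvd4 {a r : Zv} (ha : Lm a) (hr : Lm r) : 4 ∣ dotZ a r := by
  have h1 := sq8 (Lm_add ha hr)
  rw [dot_expand] at h1
  have h2 := sq8 ha
  have h3 := sq8 hr
  omega

lemma Lm_sub_mul {r a : Zv} (hr : Lm r) (ha : Lm a) (k : ℤ) :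
    Lm (fun i => r i - k * a i) := by
  obtain ⟨hp1, hs1⟩ := hr
  obtain ⟨hp2, hs2⟩ := ha
  have hk2 : k % 2 = 0 ∨ k % 2 = 1 := by omega
  constructor
  · rcases hp1 with h1 | h1 <;> rcases hp2 with h2 | h2
    · refine Or.inl fun i => ?_
      have e1 := Int.even_iff.1 (h1 i); have e2 := Int.even_iff.1 (h2 i)
      rw [Int.even_iff, Int.sub_emod, Int.mul_emod, e1, e2]; omega
    · rcases hk2 with hk | hk
      · refine Or.inl fun i => ?_
        have e1 := Int.even_iff.1 (h1 i); have e2 := Int.odd_iff.1 (h2 i)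
        rw [Int.even_iff, Int.sub_emod, Int.mul_emod, e1, e2, hk]; omega
      · refine Or.inr fun i => ?_
        have e1 := Int.even_iff.1 (h1 i); have e2 := Int.odd_iff.1 (h2 i)
        rw [Int.odd_iff, Int.sub_emod, Int.mul_emod, e1, e2, hk]; omega
    · refine Or.inr fun i => ?_
      have e1 := Int.odd_iff.1 (h1 i); have e2 := Int.even_iff.1 (h2 i)
      rw [Int.odd_iff, Int.sub_emod, Int.mul_emod, e1, e2]; omega
    · rcases hk2 with hk | hk
      · refine Or.inr fun i => ?_
        have e1 := Int.odd_iff.1 (h1 i); have e2 := Int.odd_iff.1 (h2 i)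
        rw [Int.odd_iff, Int.sub_emod, Int.mul_emod, e1, e2, hk]; omega
      · refine Or.inl fun i => ?_
        have e1 := Int.odd_iff.1 (h1 i); have e2 := Int.odd_iff.1 (h2 i)
        rw [Int.even_iff, Int.sub_emod, Int.mul_emod, e1, e2, hk]; omega
  · rw [Finset.sum_sub_distrib, ← Finset.mul_sum]
    rcases hs1 with ⟨m1, hm1⟩; rcases hs2 with ⟨m2, hm2⟩
    exact ⟨m1 - k * m2, by rw [hm1, hm2]; ring⟩

lemma PmL_lm {r : Zv} (h : PmL r) : Lm r := ⟨h.2.1, h.2.2⟩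

lemma dot_sub_mul (r a : Zv) (k : ℤ) :
    dotZ (fun i => r i - k * a i) (fun i => r i - k * a i)
      = dotZ r r - 2 * k * dotZ a r + k * k * dotZ a a := by
  unfold dotZ
  rw [Finset.mul_sum, Finset.mul_sum, ← Finset.sum_sub_distrib, ← Finset.sum_add_distrib]
  exact Finset.sum_congr rfl fun i _ => by ring

lemma PmL_reflZ {a r : Zv} (ha : PmL a) (hr : PmL r) : PmL (reflZ a r) := by
  have hdvd : (4:ℤ) ∣ dotZ a r := dvd4 (PmL_lm ha) (PmL_lm hr)
  have hk : 4 * (dotZ a r / 4) = dotZ a r := Int.mul_ediv_cancel' hdvd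
  set k := dotZ a r / 4 with hkdef
  have hre : reflZ a r = fun i => r i - k * a i := rfl
  rw [hre]
  refine ⟨?_, (Lm_sub_mul (PmL_lm hr) (PmL_lm ha) k).1, (Lm_sub_mul (PmL_lm hr) (PmL_lm ha) k).2⟩
  rw [dot_sub_mul, hr.1, ha.1, ← hk]
  ring

lemma dotZ_th (r : Zv) : dotZ thZ r = 2 * (r 6 + r 7) := by
  unfold dotZ
  rw [Fin.sum_univ_eight]
  simp only [show thZ 0 = 0 from rfl, show thZ 1 = 0 from rfl, show thZ 2 = 0 from rfl,
    show thZ 3 = 0 from rfl, show thZ 4 = 0 from rfl, show thZ 5 = 0 from rfl,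
    show thZ 6 = 2 from rfl, show thZ 7 = 2 from rfl]
  ring

lemma theta_bound {r : Zv} (hr : PmL r) :
    dotZ thZ r = -8 ∨ dotZ thZ r = -4 ∨ dotZ thZ r = 0 ∨ dotZ thZ r = 4 ∨ dotZ thZ r = 8 := by
  have hdvd : (4:ℤ) ∣ dotZ thZ r := by
    have hth : Lm thZ := ⟨Or.inl (by decide), by decide⟩
    exact dvd4 hth (PmL_lm hr)
  have h67 : r 6 * r 6 + r 7 * r 7 ≤ 8 := by
    have h1 : ∑ i ∈ ({6, 7} : Finset (Fin 8)), r i * r i ≤ dotZ r r := by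
      unfold dotZ
      apply Finset.sum_le_sum_of_subset_of_nonneg (Finset.subset_univ _)
      intro i _ _; exact mul_self_nonneg _
    rw [Finset.sum_pair (by decide : (6 : Fin 8) ≠ 7)] at h1
    have h8 := hr.1
    omega
  have hsq : (r 6 + r 7) * (r 6 + r 7) ≤ 16 := by nlinarith [mul_self_nonneg (r 6 - r 7)]
  have hb : -4 ≤ r 6 + r 7 ∧ r 6 + r 7 ≤ 4 := by constructor <;> nlinarith
  rw [dotZ_th] at *
  omega

lemma dot_diff_expand (r s : Zv) :
    ∑ i, (r i - s i) * (r i - s i) = dotZ r r - 2 * dotZ s r + dotZ s s := by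
  unfold dotZ
  rw [Finset.mul_sum, ← Finset.sum_sub_distrib, ← Finset.sum_add_distrib]
  exact Finset.sum_congr rfl fun i _ => by ring

lemma sum_mulself_zero {f : Fin 8 → ℤ} (h : ∑ i, f i * f i = 0) : ∀ i, f i = 0 := by
  intro i
  have hnn : ∀ j ∈ Finset.univ, (0:ℤ) ≤ f j * f j := fun j _ => mul_self_nonneg _
  have := (Finset.sum_eq_zero_iff_of_nonneg hnn).1 h i (Finset.mem_univ i)
  nlinarith [this]

lemma rigid_top {r : Zv} (hr : PmL r) (h : dotZ thZ r = 8) : r = thZ := by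
  have h0 : ∑ i, (r i - thZ i) * (r i - thZ i) = 0 := by
    rw [dot_diff_expand r thZ, hr.1, h]
    have : dotZ thZ thZ = 8 := by decide
    omega
  funext i
  have := sum_mulself_zero h0 i
  omega

lemma rigid_bot {r : Zv} (hr : PmL r) (h : dotZ thZ r = -8) : r = fun i => -thZ i := by
  have hd : dotZ (fun i => -thZ i) r = 8 := by
    unfold dotZ at h ⊢
    have : ∑ i, (fun i => -thZ i) i * r i = -∑ i, thZ i * r i := by
      rw [← Finset.sum_neg_distrib]
      exact Finset.sum_congr rfl fun i _ => by ring
    rw [this, h]; ring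
  have h0 : ∑ i, (r i - (-thZ i)) * (r i - (-thZ i)) = 0 := by
    rw [dot_diff_expand r (fun i => -thZ i), hr.1, hd]
    have : dotZ (fun i => -thZ i) (fun i => -thZ i) = 8 := by decide
    omega
  funext i
  have := sum_mulself_zero h0 i
  omega

/-! ## Bridge to ℝ⁸ -/

def iota (r : Zv) : E8Space := WithLp.toLp 2 (fun i => (r i : ℝ) / 2)

lemma iota_inj {r s : Zv} (h : iota r = iota s) : r = s := by
  funext i
  have := congrArg (fun v : E8Space => v i) h
  simp only [iota, PiLp.toLp_apply] at this
  have : (r i : ℝ) = s i := by linarith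
  exact_mod_cast this

lemma inner_iota (r s : Zv) : ⟪iota r, iota s⟫ = (dotZ r s : ℝ) / 4 := by
  simp only [PiLp.inner_apply, RCLike.inner_apply, conj_trivial, iota, PiLp.toLp_apply, dotZ]
  push_cast
  rw [Finset.sum_div]
  exact Finset.sum_congr rfl fun i _ => by ring

lemma sum_iota (r : Zv) : ∑ i, iota r i = ((∑ i, r i : ℤ) : ℝ) / 2 := by
  simp only [iota, PiLp.toLp_apply]
  push_cast
  rw [Finset.sum_div]

lemma mem_Delta_iff {v : E8Space} : v ∈ E8Delta ↔ ∃ r : Zv, PmL r ∧ v = iota r := by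
  constructor
  · rintro ⟨hnorm, hint, m, hsum⟩
    have : ∃ r : Zv, ((∀ i, Even (r i)) ∨ (∀ i, Odd (r i))) ∧ v = iota r := by
      rcases hint with hint | hint
      · choose n hn using hint
        refine ⟨fun i => 2 * n i, Or.inl fun i => ⟨n i, by ring⟩, PiLp.ext fun i => ?_⟩
        simp only [iota, PiLp.toLp_apply, hn i]
        push_cast; ring
      · choose n hn using hint
        refine ⟨fun i => 2 * n i + 1, Or.inr fun i => ⟨n i, by ring⟩, PiLp.ext fun i => ?_⟩
        simp only [iota, PiLp.toLp_apply, hn i]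
        push_cast; ring
    obtain ⟨r, hpar, hv⟩ := this
    subst hv
    refine ⟨r, ⟨?_, hpar, ?_⟩, rfl⟩
    · rw [inner_iota] at hnorm
      have : (dotZ r r : ℝ) = 8 := by linarith
      exact_mod_cast this
    · rw [sum_iota] at hsum
      have : ((∑ i, r i : ℤ) : ℝ) = ((4 * m : ℤ) : ℝ) := by push_cast at hsum ⊢; linarith
      exact ⟨m, by exact_mod_cast this⟩
  · rintro ⟨r, ⟨hdot, hpar, m, hm⟩, rfl⟩
    refine ⟨?_, ?_, ⟨m, ?_⟩⟩
    · rw [inner_iota, hdot]; norm_num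
    · rcases hpar with hpar | hpar
      · refine Or.inl fun i => ?_
        obtain ⟨k, hk⟩ := hpar i
        exact ⟨k, by simp only [iota, PiLp.toLp_apply, hk]; push_cast; ring⟩
      · refine Or.inr fun i => ?_
        obtain ⟨k, hk⟩ := hpar i
        exact ⟨k, by simp only [iota, PiLp.toLp_apply, hk]; push_cast; ring⟩
    · rw [sum_iota, hm]; push_cast; ring

lemma theta_eq : thetaE8 = iota thZ := by
  ext i
  fin_cases i <;>
    first
      | (show (0:ℝ) = ((0:ℤ):ℝ)/2; norm_num)
      | (show (1:ℝ) = ((2:ℤ):ℝ)/2; norm_num)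

lemma theta_mem : thetaE8 ∈ E8Delta := by
  rw [mem_Delta_iff]
  exact ⟨thZ, ⟨by decide, Or.inl (by decide), by decide⟩, theta_eq⟩

/-! ## Reflections -/

lemma mul_apply' (f g : E8Space ≃ₗ[ℝ] E8Space) (x : E8Space) : (f * g) x = f (g x) := rfl
lemma one_apply' (x : E8Space) : (1 : E8Space ≃ₗ[ℝ] E8Space) x = x := rfl

def rfl8 (α : E8Space) (h : ⟪α, α⟫ = 2) : E8Space ≃ₗ[ℝ] E8Space :=
  LinearEquiv.ofInvolutive
    { toFun := fun x => x - ⟪x, α⟫ • α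
      map_add' := fun x y => by
        simp only [inner_add_left, add_smul]
        abel
      map_smul' := fun c x => by
        simp only [RingHom.id_apply, real_inner_smul_left, smul_sub, smul_smul]
      }
    (fun x => by
      simp only [LinearMap.coe_mk, AddHom.coe_mk, inner_sub_left, real_inner_smul_left, h,
        sub_smul, smul_smul]
      module)

lemma rfl8_apply (α : E8Space) (h : ⟪α, α⟫ = 2) (x : E8Space) :
    rfl8 α h x = x - ⟪x, α⟫ • α := rfl

lemma norm_two_of_mem {α : E8Space} (hα : α ∈ E8Delta) : ⟪α, α⟫ = 2 := hα.1

lemma rfl8_mem {α : E8Space} (hα : α ∈ E8Delta) :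
    rfl8 α (norm_two_of_mem hα) ∈ weylGroupE8 :=
  Subgroup.subset_closure ⟨α, hα, fun _ => rfl⟩

/-! ## Weyl group elements are orthogonal and preserve Δ -/

lemma weyl_inner {g : E8Space ≃ₗ[ℝ] E8Space} (hg : g ∈ weylGroupE8) :
    ∀ x y : E8Space, ⟪g x, g y⟫ = ⟪x, y⟫ := by
  refine Subgroup.closure_induction ?_ ?_ ?_ ?_ hg
  · rintro g ⟨α, hα, hgx⟩ x y
    have h2 : ⟪α, α⟫ = 2 := hα.1
    rw [hgx x, hgx y]
    simp only [inner_sub_left, inner_sub_right, real_inner_smul_left, real_inner_smul_right, h2]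
    rw [real_inner_comm α y]
    ring
  · intro x y; rfl
  · intro a b _ _ ha hb x y
    rw [mul_apply', mul_apply', ha, hb]
  · intro a _ ha x y
    have h1 : a (a⁻¹ x) = x := by rw [← mul_apply', mul_inv_cancel, one_apply']
    have h2 : a (a⁻¹ y) = y := by rw [← mul_apply', mul_inv_cancel, one_apply']
    conv_rhs => rw [← h1, ← h2, ha]

lemma iota_reflZ {a s : Zv} (hdvd : (4:ℤ) ∣ dotZ a s) :
    iota s - ⟪iota s, iota a⟫ • iota a = iota (reflZ a s) := by
  obtain ⟨k, hk⟩ : ∃ k, dotZ a s = 4 * k := ⟨_, (Int.mul_ediv_cancel' hdvd).symm⟩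
  have hrefl : reflZ a s = fun i => s i - k * a i := by
    funext i
    simp only [reflZ, hk]
    congr 1
    have : (4 * k) / 4 = k := by omega
    rw [this]
  have hcast : (dotZ s a : ℝ) = 4 * (k : ℝ) := by
    rw [dotZ_comm s a, hk]; push_cast; ring
  ext i
  rw [inner_iota]
  simp only [PiLp.sub_apply, PiLp.smul_apply, smul_eq_mul, iota, PiLp.toLp_apply, hrefl, hcast]
  push_cast
  ring

lemma gen_delta_step {α : E8Space} (hα : α ∈ E8Delta) {v : E8Space} (hv : v ∈ E8Delta) :
    v - ⟪v, α⟫ • α ∈ E8Delta := by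
  obtain ⟨a, ha, rfl⟩ := mem_Delta_iff.1 hα
  obtain ⟨r, hr, rfl⟩ := mem_Delta_iff.1 hv
  have hdvd : (4:ℤ) ∣ dotZ a r := dvd4 (PmL_lm ha) (PmL_lm hr)
  rw [iota_reflZ hdvd]
  exact mem_Delta_iff.2 ⟨reflZ a r, PmL_reflZ ha hr, rfl⟩

lemma weyl_delta {g : E8Space ≃ₗ[ℝ] E8Space} (hg : g ∈ weylGroupE8) :
    ∀ v ∈ E8Delta, g v ∈ E8Delta := by
  suffices h : (∀ v ∈ E8Delta, g v ∈ E8Delta) ∧ (∀ v ∈ E8Delta, g⁻¹ v ∈ E8Delta) from h.1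
  refine Subgroup.closure_induction ?_ ?_ ?_ ?_ hg
  · rintro g ⟨α, hα, hgx⟩
    have hginv : ∀ x, g⁻¹ x = g x := by
      have hgg : g * g = 1 := by
        apply LinearEquiv.toLinearMap_injective
        apply LinearMap.ext
        intro x
        show (g * g) x = (1 : E8Space ≃ₗ[ℝ] E8Space) x
        rw [mul_apply', hgx, hgx x]
        simp only [inner_sub_left, real_inner_smul_left, hα.1, sub_smul, smul_smul]
        rw [one_apply']
        module
      intro x
      rw [inv_eq_of_mul_eq_one_right hgg, hgx]
    constructor
    · intro v hv; rw [hgx]; exact gen_delta_step hα hv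
    · intro v hv; rw [hginv, hgx]; exact gen_delta_step hα hv
  · exact ⟨fun v hv => hv, fun v hv => by rw [inv_one, one_apply']; exact hv⟩
  · intro a b _ _ ha hb
    constructor
    · intro v hv; rw [mul_apply']; exact ha.1 _ (hb.1 v hv)
    · intro v hv
      rw [mul_inv_rev, mul_apply']
      exact hb.2 _ (ha.2 v hv)
  · intro a _ ha
    exact ⟨fun v hv => ha.2 v hv, fun v hv => by rw [inv_inv]; exact ha.1 v hv⟩

/-! ## Step and word lemmas -/

lemma stepW {a : Zv} (haP : PmL a) :
    ∃ w ∈ weylGroupE8, ∀ s : Zv, (4:ℤ) ∣ dotZ a s → w (iota s) = iota (reflZ a s) := by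
  have haΔ : iota a ∈ E8Delta := mem_Delta_iff.2 ⟨a, haP, rfl⟩
  refine ⟨rfl8 (iota a) (norm_two_of_mem haΔ), rfl8_mem haΔ, fun s hdvd => ?_⟩
  rw [rfl8_apply]
  exact iota_reflZ hdvd

lemma stepH {a : Zv} (hOk : Okw a) :
    ∃ h ∈ stabThetaE8, ∀ s : Zv, (4:ℤ) ∣ dotZ a s → h (iota s) = iota (reflZ a s) := by
  obtain ⟨w, hwW, hw⟩ := stepW hOk.1
  have hfix : w thetaE8 = thetaE8 := by
    have hdvd : (4:ℤ) ∣ dotZ a thZ := by rw [dotZ_comm a thZ, hOk.2]; exact dvd_zero 4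
    have h1 : w (iota thZ) = iota (reflZ a thZ) := hw thZ hdvd
    have h2 : reflZ a thZ = thZ := by
      funext i
      simp only [reflZ]
      rw [dotZ_comm a thZ, hOk.2]
      norm_num
    rw [theta_eq, h1, h2]
  exact ⟨w, ⟨hwW, MulAction.mem_stabilizer_iff.2 hfix⟩, hw⟩

lemma wordH (l : List ℕ) (r : Zv) (hr : PmL r) (hl : ∀ a ∈ l, Okw (ofN a)) :
    PmL (applyW r l) ∧ ∃ h ∈ stabThetaE8, h (iota r) = iota (applyW r l) := by
  induction l generalizing r with
  | nil => exact ⟨hr, 1, one_mem _, rfl⟩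
  | cons a l ih =>
    have hOk : Okw (ofN a) := hl a List.mem_cons_self
    have hP1 : PmL (reflZ (ofN a) r) := PmL_reflZ hOk.1 hr
    have happ : applyW r (a :: l) = applyW (reflZ (ofN a) r) l := rfl
    obtain ⟨hPfin, h', hh'H, hh'⟩ := ih (reflZ (ofN a) r) hP1 (fun b hb => hl b (List.mem_cons_of_mem a hb))
    obtain ⟨h1, hh1H, hh1⟩ := stepH hOk
    refine ⟨by rw [happ]; exact hPfin, h' * h1, mul_mem hh'H hh1H, ?_⟩
    rw [mul_apply', hh1 r (dvd4 (PmL_lm hOk.1) (PmL_lm hr)), hh', happ]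

lemma wordW (l : List ℕ) (r : Zv) (hr : PmL r) (hl : ∀ a ∈ l, PmL (ofN a)) :
    PmL (applyW r l) ∧ ∃ w ∈ weylGroupE8, w (iota r) = iota (applyW r l) := by
  induction l generalizing r with
  | nil => exact ⟨hr, 1, one_mem _, rfl⟩
  | cons a l ih =>
    have hOk : PmL (ofN a) := hl a List.mem_cons_self
    have hP1 : PmL (reflZ (ofN a) r) := PmL_reflZ hOk hr
    have happ : applyW r (a :: l) = applyW (reflZ (ofN a) r) l := rfl
    obtain ⟨hPfin, h', hh'H, hh'⟩ := ih (reflZ (ofN a) r) hP1 (fun b hb => hl b (List.mem_cons_of_mem a hb))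
    obtain ⟨h1, hh1H, hh1⟩ := stepW hOk
    refine ⟨by rw [happ]; exact hPfin, h' * h1, mul_mem hh'H hh1H, ?_⟩
    rw [mul_apply', hh1 r (dvd4 (PmL_lm hOk) (PmL_lm hr)), hh', happ]

/-! ## Certificate machinery -/

def dec (n : ℕ) : List ℤ := List.ofFn (ofN n)

def CovOk (base : Zv) (certs : List (ℕ × List ℕ)) (r : Zv) : Prop :=
  ∃ e ∈ certs, dec e.1 = List.ofFn r ∧ (∀ a ∈ e.2, Okw (ofN a)) ∧
    List.ofFn (applyW base e.2) = List.ofFn r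

instance (b c r) : Decidable (CovOk b c r) := by unfold CovOk; infer_instance

def sg (b : Bool) : ℤ := bif b then 1 else -1

def bv (b0 b1 b2 b3 b4 b5 b6 b7 : Bool) : Zv :=
  ![sg b0, sg b1, sg b2, sg b3, sg b4, sg b5, sg b6, sg b7]

def vecf (i j : Fin 8) (s t : Bool) : Zv :=
  fun k => if k = i then 2 * sg s else if k = j then 2 * sg t else 0

set_option maxHeartbeats 4000000
set_option maxRecDepth 100000
def certsc1 : List (ℕ × List ℕ) := [(226564, []),
  (226560, [195324, 195304]),
  (351564, [70312]),
  (351560, [195324, 195304, 70312]),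
  (226572, [195304]),
  (226552, [195324]),
  (351572, [195304, 70312]),
  (351552, [195324, 70312]),
  (226612, [195264]),
  (226512, [195364]),
  (351612, [195264, 70312]),
  (351512, [195364, 70312]),
  (226812, [195064]),
  (226312, [195564]),
  (351812, [195064, 70312]),
  (351312, [195564, 70312]),
  (227812, [194064]),
  (225312, [196564]),
  (352812, [194064, 70312]),
  (350312, [196564, 70312]),
  (232812, [189064]),
  (220312, [201564]),
  (357812, [189064, 70312]),
  (345312, [201564, 70312]),
  (292968, [128908]),
  (285468, [136408]),
  (286468, [135408]),
  (291468, [130408]),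
  (286668, [135208]),
  (291668, [130208]),
  (292668, [129208]),
  (285168, [136708]),
  (286708, [135168]),
  (291708, [130168]),
  (292708, [129168]),
  (285208, [136668]),
  (292908, [128968]),
  (285408, [136468]),
  (286408, [135468]),
  (291408, [130468]),
  (286716, [195304, 135168]),
  (291716, [195304, 130168]),
  (292716, [195304, 129168]),
  (285216, [195304, 136668]),
  (292916, [195304, 128968]),
  (285416, [195304, 136468]),
  (286416, [195304, 135468]),
  (291416, [195304, 130468]),
  (292956, [195324, 128908]),
  (285456, [195324, 136408]),
  (286456, [195324, 135408]),
  (291456, [195324, 130408]),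
  (286656, [195324, 135208]),
  (291656, [195324, 130208]),
  (292656, [195324, 129208]),
  (285156, [195324, 136708])]

def certsc0 : List (ℕ × List ℕ) := [(195324, []),
  (195304, [195372, 195272]),
  (195320, [195364, 195264]),
  (195300, [195324]),
  (195364, [195272]),
  (195264, [195372]),
  (195360, [195324, 195372]),
  (195260, [195324, 195272]),
  (195564, [195072]),
  (195064, [195572]),
  (195560, [195324, 195572]),
  (195060, [195324, 195072]),
  (196564, [194072]),
  (194064, [196572]),
  (196560, [195324, 196572]),
  (194060, [195324, 194072]),
  (201564, [189072]),
  (189064, [201572]),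
  (201560, [195324, 201572]),
  (189060, [195324, 189072]),
  (195372, [195264]),
  (195272, [195364]),
  (195352, [195324, 195364]),
  (195252, [195324, 195264]),
  (195572, [195064]),
  (195072, [195564]),
  (195552, [195324, 195564]),
  (195052, [195324, 195064]),
  (196572, [194064]),
  (194072, [196564]),
  (196552, [195324, 196564]),
  (194052, [195324, 194064]),
  (201572, [189064]),
  (189072, [201564]),
  (201552, [195324, 201564]),
  (189052, [195324, 189064]),
  (195612, [195264, 195072]),
  (195112, [195264, 195572]),
  (195512, [195364, 195072]),
  (195012, [195364, 195572]),
  (196612, [195264, 194072]),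
  (194112, [195264, 196572]),
  (196512, [195364, 194072]),
  (194012, [195364, 196572]),
  (201612, [195264, 189072]),
  (189112, [195264, 201572]),
  (201512, [195364, 189072]),
  (189012, [195364, 201572]),
  (196812, [195064, 194072]),
  (194312, [195064, 196572]),
  (196312, [195564, 194072]),
  (193812, [195564, 196572]),
  (201812, [195064, 189072]),
  (189312, [195064, 201572]),
  (201312, [195564, 189072]),
  (188812, [195564, 201572]),
  (202812, [194064, 189072]),
  (190312, [194064, 201572]),
  (200312, [196564, 189072]),
  (187812, [196564, 201572]),
  (70312, [255468, 260168]),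
  (320312, [130468, 135168]),
  (130468, [260168]),
  (255468, [135168]),
  (135468, [255168]),
  (260468, [130168]),
  (136468, [254168]),
  (261468, [129168]),
  (128968, [261668]),
  (253968, [136668]),
  (136668, [253968]),
  (261668, [128968]),
  (129168, [261468]),
  (254168, [136468]),
  (130168, [260468]),
  (255168, [135468]),
  (135168, [255468]),
  (260168, [130468]),
  (136708, [195272, 253968]),
  (261708, [195272, 128968]),
  (129208, [195272, 261468]),
  (254208, [195272, 136468]),
  (130208, [195272, 260468]),
  (255208, [195272, 135468]),
  (135208, [195272, 255468]),
  (260208, [195272, 130468]),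
  (130408, [195372, 260168]),
  (255408, [195372, 135168]),
  (135408, [195372, 255168]),
  (260408, [195372, 130168]),
  (136408, [195372, 254168]),
  (261408, [195372, 129168]),
  (128908, [195372, 261668]),
  (253908, [195372, 136668]),
  (136716, [195264, 253968]),
  (261716, [195264, 128968]),
  (129216, [195264, 261468]),
  (254216, [195264, 136468]),
  (130216, [195264, 260468]),
  (255216, [195264, 135468]),
  (135216, [195264, 255468]),
  (260216, [195264, 130468]),
  (130416, [195364, 260168]),
  (255416, [195364, 135168]),
  (135416, [195364, 255168]),
  (260416, [195364, 130168]),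
  (136416, [195364, 254168]),
  (261416, [195364, 129168]),
  (128916, [195364, 261668]),
  (253916, [195364, 136668]),
  (130456, [195324, 130468]),
  (255456, [195324, 255468]),
  (135456, [195324, 135468]),
  (260456, [195324, 260468]),
  (136456, [195324, 136468]),
  (261456, [195324, 261468]),
  (128956, [195324, 128968]),
  (253956, [195324, 253968]),
  (136656, [195324, 136668]),
  (261656, [195324, 261668]),
  (129156, [195324, 129168]),
  (254156, [195324, 254168]),
  (130156, [195324, 130168]),
  (255156, [195324, 255168]),
  (135156, [195324, 135168]),
  (260156, [195324, 260168])]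

def certscm1 : List (ℕ × List ℕ) := [(164064, []),
  (164060, [195324, 195304]),
  (39064, [70312]),
  (39060, [195324, 195304, 70312]),
  (164072, [195304]),
  (164052, [195324]),
  (39072, [195304, 70312]),
  (39052, [195324, 70312]),
  (164112, [195264]),
  (164012, [195364]),
  (39112, [195264, 70312]),
  (39012, [195364, 70312]),
  (164312, [195064]),
  (163812, [195564]),
  (39312, [195064, 70312]),
  (38812, [195564, 70312]),
  (165312, [194064]),
  (162812, [196564]),
  (40312, [194064, 70312]),
  (37812, [196564, 70312]),
  (170312, [189064]),
  (157812, [201564]),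
  (45312, [189064, 70312]),
  (32812, [201564, 70312]),
  (105468, [253908]),
  (97968, [261408]),
  (98968, [260408]),
  (103968, [255408]),
  (99168, [260208]),
  (104168, [255208]),
  (105168, [254208]),
  (97668, [261708]),
  (99208, [260168]),
  (104208, [255168]),
  (105208, [254168]),
  (97708, [261668]),
  (105408, [253968]),
  (97908, [261468]),
  (98908, [260468]),
  (103908, [255468]),
  (99216, [195304, 260168]),
  (104216, [195304, 255168]),
  (105216, [195304, 254168]),
  (97716, [195304, 261668]),
  (105416, [195304, 253968]),
  (97916, [195304, 261468]),
  (98916, [195304, 260468]),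
  (103916, [195304, 255468]),
  (105456, [195324, 253908]),
  (97956, [195324, 261408]),
  (98956, [195324, 260408]),
  (103956, [195324, 255408]),
  (99156, [195324, 260208]),
  (104156, [195324, 255208]),
  (105156, [195324, 254208]),
  (97656, [195324, 261708])]

def repc1 : List ℕ := [39064]

def repc0 : List ℕ := [164064, 39072]

def repcm1 : List ℕ := [164064, 382812]

def repcm2 : List ℕ := [382812]

def t1n : ℕ := 226564

def t0n : ℕ := 195324

def tm1n : ℕ := 164064

-- th enc = 382812, -th enc = 7812

def t1 : Zv := ofN t1n
def t0 : Zv := ofN t0n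
def tm1 : Zv := ofN tm1n

lemma covOdd1 : ∀ b0 b1 b2 b3 b4 b5 b6 b7 : Bool,
    (4 ∣ ∑ i, bv b0 b1 b2 b3 b4 b5 b6 b7 i) → dotZ thZ (bv b0 b1 b2 b3 b4 b5 b6 b7) = 4 →
    CovOk t1 certsc1 (bv b0 b1 b2 b3 b4 b5 b6 b7) := by decide

lemma covEven1 : ∀ i j : Fin 8, i ≠ j → ∀ s t : Bool,
    dotZ thZ (vecf i j s t) = 4 → CovOk t1 certsc1 (vecf i j s t) := by decide

lemma covOdd0 : ∀ b0 b1 b2 b3 b4 b5 b6 b7 : Bool,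
    (4 ∣ ∑ i, bv b0 b1 b2 b3 b4 b5 b6 b7 i) → dotZ thZ (bv b0 b1 b2 b3 b4 b5 b6 b7) = 0 →
    CovOk t0 certsc0 (bv b0 b1 b2 b3 b4 b5 b6 b7) := by decide

lemma covEven0 : ∀ i j : Fin 8, i ≠ j → ∀ s t : Bool,
    dotZ thZ (vecf i j s t) = 0 → CovOk t0 certsc0 (vecf i j s t) := by decide

lemma covOddm1 : ∀ b0 b1 b2 b3 b4 b5 b6 b7 : Bool,
    (4 ∣ ∑ i, bv b0 b1 b2 b3 b4 b5 b6 b7 i) → dotZ thZ (bv b0 b1 b2 b3 b4 b5 b6 b7) = -4 →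
    CovOk tm1 certscm1 (bv b0 b1 b2 b3 b4 b5 b6 b7) := by decide

lemma covEvenm1 : ∀ i j : Fin 8, i ≠ j → ∀ s t : Bool,
    dotZ thZ (vecf i j s t) = -4 → CovOk tm1 certscm1 (vecf i j s t) := by decide

lemma rep1_ok : (∀ a ∈ repc1, PmL (ofN a)) ∧ List.ofFn (applyW thZ repc1) = dec t1n := by decide
lemma rep0_ok : (∀ a ∈ repc0, PmL (ofN a)) ∧ List.ofFn (applyW thZ repc0) = dec t0n := by decide
lemma repm1_ok : (∀ a ∈ repcm1, PmL (ofN a)) ∧ List.ofFn (applyW thZ repcm1) = dec tm1n := by decide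
lemma repm2_ok : (∀ a ∈ repcm2, PmL (ofN a)) ∧ List.ofFn (applyW thZ repcm2) = dec 7812 := by decide

lemma t1_facts : PmL t1 ∧ dotZ thZ t1 = 4 := by decide
lemma t0_facts : PmL t0 ∧ dotZ thZ t0 = 0 := by decide
lemma tm1_facts : PmL tm1 ∧ dotZ thZ tm1 = -4 := by decide
lemma tm2_eq : ofN 7812 = (fun i => -thZ i) := by decide
lemma thZ_pm : PmL thZ := by decide

/-! ## Extraction: every root is of `bv` or `vecf` form -/

lemma single_le_dot {r : Zv} (h8 : dotZ r r = 8) (i : Fin 8) : r i * r i ≤ 8 := by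
  have h1 : ∑ j ∈ ({i} : Finset (Fin 8)), r j * r j ≤ dotZ r r := by
    unfold dotZ
    apply Finset.sum_le_sum_of_subset_of_nonneg (Finset.subset_univ _)
    intro k _ _; exact mul_self_nonneg _
  rw [Finset.sum_singleton] at h1
  omega

lemma extract (r : Zv) (hPm : PmL r) :
    (∃ b0 b1 b2 b3 b4 b5 b6 b7 : Bool, r = bv b0 b1 b2 b3 b4 b5 b6 b7) ∨
    (∃ (i j : Fin 8) (s t : Bool), i ≠ j ∧ r = vecf i j s t) := by
  obtain ⟨h8, hpar | hpar, hsum⟩ := hPm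
  · -- even case
    right
    choose n hn using hpar
    have hr2 : ∀ i, r i = 2 * n i := fun i => by have := hn i; omega
    have hsum2 : ∑ i, n i * n i = 2 := by
      have : dotZ r r = 4 * ∑ i, n i * n i := by
        unfold dotZ
        rw [Finset.mul_sum]
        exact Finset.sum_congr rfl fun i _ => by rw [hr2 i]; ring
      omega
    have hrange : ∀ i, n i = -1 ∨ n i = 0 ∨ n i = 1 := by
      intro i
      have h1 := single_le_dot h8 i
      rw [hr2 i] at h1
      have h2 : n i * n i ≤ 2 := by nlinarith
      have h3 : -1 ≤ n i ∧ n i ≤ 1 := by constructor <;> nlinarith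
      omega
    have hval : ∀ i ∈ Finset.univ, n i * n i = if n i ≠ 0 then 1 else 0 := by
      intro i _
      rcases hrange i with h | h | h <;> rw [h] <;> norm_num
    have hcard : (Finset.univ.filter (fun i => n i ≠ 0)).card = 2 := by
      rw [Finset.sum_congr rfl hval] at hsum2
      rw [Finset.sum_ite, Finset.sum_const, Finset.sum_const] at hsum2
      simp only [nsmul_eq_mul, mul_one, mul_zero, add_zero] at hsum2
      exact_mod_cast hsum2
    obtain ⟨i, j, hij, hset⟩ := Finset.card_eq_two.1 hcard
    have hmem : ∀ k, n k ≠ 0 ↔ (k = i ∨ k = j) := by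
      intro k
      constructor
      · intro hk
        have : k ∈ Finset.univ.filter (fun i => n i ≠ 0) := Finset.mem_filter.2 ⟨Finset.mem_univ _, hk⟩
        rw [hset] at this
        simpa using this
      · intro hk
        have : k ∈ ({i, j} : Finset (Fin 8)) := by simpa using hk
        rw [← hset] at this
        exact (Finset.mem_filter.1 this).2
    have hni : n i = 1 ∨ n i = -1 := by
      have h1 : n i ≠ 0 := (hmem i).2 (Or.inl rfl)
      rcases hrange i with h | h | h <;> omega
    have hnj : n j = 1 ∨ n j = -1 := by
      have h1 : n j ≠ 0 := (hmem j).2 (Or.inr rfl)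
      rcases hrange j with h | h | h <;> omega
    obtain ⟨s, hs⟩ : ∃ s : Bool, n i = sg s := by
      rcases hni with h | h
      · exact ⟨true, by simp [sg, h]⟩
      · exact ⟨false, by simp [sg, h]⟩
    obtain ⟨t, ht⟩ : ∃ t : Bool, n j = sg t := by
      rcases hnj with h | h
      · exact ⟨true, by simp [sg, h]⟩
      · exact ⟨false, by simp [sg, h]⟩
    refine ⟨i, j, s, t, hij, funext fun k => ?_⟩
    unfold vecf
    by_cases hk : k = i
    · subst hk
      rw [if_pos rfl, hr2 k, hs]
    · rw [if_neg hk]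
      by_cases hk2 : k = j
      · subst hk2
        rw [if_pos rfl, hr2 k, ht]
      · rw [if_neg hk2, hr2 k]
        have : n k = 0 := by
          by_contra hne
          rcases (hmem k).1 hne with h | h <;> [exact hk h; exact hk2 h]
        omega
  · -- odd case
    left
    have hone : ∀ i, r i = 1 ∨ r i = -1 := by
      intro i
      have h1 : ∀ k, r k * r k ≥ 1 := by
        intro k
        obtain ⟨m, hm⟩ := hpar k
        have hnn : 0 ≤ m * (m + 1) := by
          rcases le_or_gt 0 m with h | h
          · nlinarith
          · nlinarith
        rw [hm]
        nlinarith
      have h2 : ∑ k ∈ Finset.univ.erase i, r k * r k ≥ 7 := by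
        have : ∀ k ∈ Finset.univ.erase i, (1:ℤ) ≤ r k * r k := fun k _ => h1 k
        calc (7:ℤ) = (Finset.univ.erase i).card • (1:ℤ) := by
              rw [Finset.card_erase_of_mem (Finset.mem_univ _)]
              simp
          _ ≤ ∑ k ∈ Finset.univ.erase i, r k * r k := Finset.card_nsmul_le_sum _ _ _ this
      have h3 : r i * r i + ∑ k ∈ Finset.univ.erase i, r k * r k = 8 := by
        rw [← h8]
        unfold dotZ
        exact Finset.add_sum_erase _ (fun k => r k * r k) (Finset.mem_univ i)
      have h4 : r i * r i ≤ 1 := by linarith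
      have h5 := h1 i
      have h6 : -1 ≤ r i ∧ r i ≤ 1 := by constructor <;> nlinarith
      have h7 : r i = -1 ∨ r i = 0 ∨ r i = 1 := by omega
      rcases h7 with h | h | h
      · exact Or.inr h
      · rw [h] at h5; norm_num at h5
      · exact Or.inl h
    obtain ⟨b, hb⟩ : ∃ b : Fin 8 → Bool, ∀ i, r i = sg (b i) := by
      refine ⟨fun i => decide (r i = 1), fun i => ?_⟩
      rcases hone i with h | h <;> simp [h, sg]
    refine ⟨b 0, b 1, b 2, b 3, b 4, b 5, b 6, b 7, funext fun k => ?_⟩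
    fin_cases k <;> simpa [bv] using hb _

/-! ## From coverage to orbit statements -/

lemma covOk_elim {base : Zv} {certs : List (ℕ × List ℕ)} {r : Zv} (hb : PmL base)
    (h : CovOk base certs r) : ∃ h1 ∈ stabThetaE8, h1 (iota base) = iota r := by
  obtain ⟨e, _, _, hok, happ⟩ := h
  have hr : applyW base e.2 = r := List.ofFn_inj.1 happ
  obtain ⟨_, h1, hH, heq⟩ := wordH e.2 base hb hok
  exact ⟨h1, hH, by rw [heq, hr]⟩

lemma orbit1 {r : Zv} (hPm : PmL r) (hd : dotZ thZ r = 4) :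
    ∃ h ∈ stabThetaE8, h (iota t1) = iota r := by
  have hsum : (4:ℤ) ∣ ∑ i, r i := hPm.2.2
  rcases extract r hPm with ⟨b0,b1,b2,b3,b4,b5,b6,b7, rfl⟩ | ⟨i,j,s,t,hij,rfl⟩
  · exact covOk_elim t1_facts.1 (covOdd1 b0 b1 b2 b3 b4 b5 b6 b7 hsum hd)
  · exact covOk_elim t1_facts.1 (covEven1 i j hij s t hd)

lemma orbit0 {r : Zv} (hPm : PmL r) (hd : dotZ thZ r = 0) :
    ∃ h ∈ stabThetaE8, h (iota t0) = iota r := by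
  have hsum : (4:ℤ) ∣ ∑ i, r i := hPm.2.2
  rcases extract r hPm with ⟨b0,b1,b2,b3,b4,b5,b6,b7, rfl⟩ | ⟨i,j,s,t,hij,rfl⟩
  · exact covOk_elim t0_facts.1 (covOdd0 b0 b1 b2 b3 b4 b5 b6 b7 hsum hd)
  · exact covOk_elim t0_facts.1 (covEven0 i j hij s t hd)

lemma orbitm1 {r : Zv} (hPm : PmL r) (hd : dotZ thZ r = -4) :
    ∃ h ∈ stabThetaE8, h (iota tm1) = iota r := by
  have hsum : (4:ℤ) ∣ ∑ i, r i := hPm.2.2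
  rcases extract r hPm with ⟨b0,b1,b2,b3,b4,b5,b6,b7, rfl⟩ | ⟨i,j,s,t,hij,rfl⟩
  · exact covOk_elim tm1_facts.1 (covOddm1 b0 b1 b2 b3 b4 b5 b6 b7 hsum hd)
  · exact covOk_elim tm1_facts.1 (covEvenm1 i j hij s t hd)

/-! ## Representatives -/

lemma rep_exists1 : ∃ w ∈ weylGroupE8, w thetaE8 = iota t1 := by
  obtain ⟨_, w, hwW, hw⟩ := wordW repc1 thZ thZ_pm rep1_ok.1
  have happ : applyW thZ repc1 = t1 := List.ofFn_inj.1 rep1_ok.2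
  exact ⟨w, hwW, by rw [theta_eq, hw, happ]⟩

lemma rep_exists0 : ∃ w ∈ weylGroupE8, w thetaE8 = iota t0 := by
  obtain ⟨_, w, hwW, hw⟩ := wordW repc0 thZ thZ_pm rep0_ok.1
  have happ : applyW thZ repc0 = t0 := List.ofFn_inj.1 rep0_ok.2
  exact ⟨w, hwW, by rw [theta_eq, hw, happ]⟩

lemma rep_existsm1 : ∃ w ∈ weylGroupE8, w thetaE8 = iota tm1 := by
  obtain ⟨_, w, hwW, hw⟩ := wordW repcm1 thZ thZ_pm repm1_ok.1
  have happ : applyW thZ repcm1 = tm1 := List.ofFn_inj.1 repm1_ok.2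
  exact ⟨w, hwW, by rw [theta_eq, hw, happ]⟩

lemma rep_existsm2 : ∃ w ∈ weylGroupE8, w thetaE8 = iota (fun i => -thZ i) := by
  obtain ⟨_, w, hwW, hw⟩ := wordW repcm2 thZ thZ_pm repm2_ok.1
  have happ : applyW thZ repcm2 = ofN 7812 := List.ofFn_inj.1 repm2_ok.2
  exact ⟨w, hwW, by rw [theta_eq, hw, happ, tm2_eq]⟩

/-! ## Double cosets -/

def DD (w : E8Space ≃ₗ[ℝ] E8Space) : Set (E8Space ≃ₗ[ℝ] E8Space) :=
  {x | ∃ h₁ ∈ stabThetaE8, ∃ h₂ ∈ stabThetaE8, x = h₁ * w * h₂}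

lemma mem_DD_self (w : E8Space ≃ₗ[ℝ] E8Space) : w ∈ DD w :=
  ⟨1, one_mem _, 1, one_mem _, by rw [one_mul, mul_one]⟩

lemma stab_W {h : E8Space ≃ₗ[ℝ] E8Space} (hh : h ∈ stabThetaE8) : h ∈ weylGroupE8 :=
  hh.1

lemma stab_fix {h : E8Space ≃ₗ[ℝ] E8Space} (hh : h ∈ stabThetaE8) : h thetaE8 = thetaE8 :=
  hh.2

lemma stab_fix_inv {h : E8Space ≃ₗ[ℝ] E8Space} (hh : h ∈ stabThetaE8) :
    h⁻¹ thetaE8 = thetaE8 := by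
  conv_lhs => rw [← stab_fix hh]
  rw [← mul_apply', inv_mul_cancel, one_apply']

lemma DD_eq {w w' : E8Space ≃ₗ[ℝ] E8Space} (hw : w ∈ weylGroupE8) (hw' : w' ∈ weylGroupE8)
    (h : ∃ h₁ ∈ stabThetaE8, h₁ (w' thetaE8) = w thetaE8) : DD w = DD w' := by
  obtain ⟨h₁, hH, hE⟩ := h
  have huW : w'⁻¹ * h₁⁻¹ * w ∈ weylGroupE8 :=
    mul_mem (mul_mem (inv_mem hw') (inv_mem (stab_W hH))) hw
  have huθ : (w'⁻¹ * h₁⁻¹ * w) thetaE8 = thetaE8 := by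
    rw [mul_apply', mul_apply', ← hE, ← mul_apply' h₁⁻¹, inv_mul_cancel, one_apply',
      ← mul_apply', inv_mul_cancel, one_apply']
  have huH : w'⁻¹ * h₁⁻¹ * w ∈ stabThetaE8 :=
    ⟨huW, MulAction.mem_stabilizer_iff.2 huθ⟩
  set u := w'⁻¹ * h₁⁻¹ * w with hu
  have hww : w = h₁ * w' * u := by rw [hu]; group
  have hw'w : w' = h₁⁻¹ * w * u⁻¹ := by rw [hu]; group
  ext x
  constructor
  · rintro ⟨a, haH, b, hbH, rfl⟩
    exact ⟨a * h₁, mul_mem haH hH, u * b, mul_mem huH hbH, by rw [hww]; group⟩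
  · rintro ⟨a, haH, b, hbH, rfl⟩
    exact ⟨a * h₁⁻¹, mul_mem haH (inv_mem hH), u⁻¹ * b, mul_mem (inv_mem huH) hbH,
      by rw [hw'w]; group⟩

lemma DD_val {w x : E8Space ≃ₗ[ℝ] E8Space} (hx : x ∈ DD w) :
    ⟪thetaE8, x thetaE8⟫ = ⟪thetaE8, w thetaE8⟫ := by
  obtain ⟨a, haH, b, hbH, rfl⟩ := hx
  rw [mul_apply', mul_apply', stab_fix hbH]
  have key : a (a⁻¹ thetaE8) = thetaE8 := by rw [← mul_apply', mul_inv_cancel, one_apply']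
  calc ⟪thetaE8, a (w thetaE8)⟫ = ⟪a (a⁻¹ thetaE8), a (w thetaE8)⟫ := by rw [key]
    _ = ⟪a⁻¹ thetaE8, w thetaE8⟫ := weyl_inner (stab_W haH) _ _
    _ = ⟪thetaE8, w thetaE8⟫ := by rw [stab_fix_inv haH]

/-! ## Values -/

lemma val_one : ⟪thetaE8, (1 : E8Space ≃ₗ[ℝ] E8Space) thetaE8⟫ = 2 := by
  rw [one_apply', theta_eq, inner_iota]
  have : dotZ thZ thZ = 8 := by decide
  rw [this]; norm_num

lemma val_of_iota {w : E8Space ≃ₗ[ℝ] E8Space} {r : Zv} (hw : w thetaE8 = iota r) :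
    ⟪thetaE8, w thetaE8⟫ = (dotZ thZ r : ℝ) / 4 := by
  rw [hw]
  conv_lhs => rw [theta_eq]
  rw [inner_iota]

/-- The Weyl group of E₈ has exactly 5 double cosets with respect to the
stabilizer `H` of the root θ: the set of subsets of the form `H w H` with
`w ∈ W` has exactly 5 elements. -/
theorem E8_doset_card :
    {s : Set (E8Space ≃ₗ[ℝ] E8Space) | ∃ w ∈ weylGroupE8,
      s = {x | ∃ h₁ ∈ stabThetaE8, ∃ h₂ ∈ stabThetaE8, x = h₁ * w * h₂}}.ncard = 5 := by
  classical
  obtain ⟨w1, hw1W, hw1θ⟩ := rep_exists1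
  obtain ⟨w0, hw0W, hw0θ⟩ := rep_exists0
  obtain ⟨wm1, hwm1W, hwm1θ⟩ := rep_existsm1
  obtain ⟨wm2, hwm2W, hwm2θ⟩ := rep_existsm2
  have hval1 : ⟪thetaE8, w1 thetaE8⟫ = 1 := by
    rw [val_of_iota hw1θ, t1_facts.2]; norm_num
  have hval0 : ⟪thetaE8, w0 thetaE8⟫ = 0 := by
    rw [val_of_iota hw0θ, t0_facts.2]; norm_num
  have hvalm1 : ⟪thetaE8, wm1 thetaE8⟫ = -1 := by
    rw [val_of_iota hwm1θ, tm1_facts.2]; norm_num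
  have hvalm2 : ⟪thetaE8, wm2 thetaE8⟫ = -2 := by
    rw [val_of_iota hwm2θ]
    have : dotZ thZ (fun i => -thZ i) = -8 := by decide
    rw [this]; norm_num
  have main : {s : Set (E8Space ≃ₗ[ℝ] E8Space) | ∃ w ∈ weylGroupE8,
      s = {x | ∃ h₁ ∈ stabThetaE8, ∃ h₂ ∈ stabThetaE8, x = h₁ * w * h₂}}
      = {DD 1, DD w1, DD w0, DD wm1, DD wm2} := by
    ext s
    simp only [Set.mem_setOf_eq, Set.mem_insert_iff, Set.mem_singleton_iff]
    constructor
    · rintro ⟨w, hwW, rfl⟩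
      have hθΔ : w thetaE8 ∈ E8Delta := weyl_delta hwW _ theta_mem
      obtain ⟨r, hr, hre⟩ := mem_Delta_iff.1 hθΔ
      rcases theta_bound hr with hd | hd | hd | hd | hd
      · refine Or.inr (Or.inr (Or.inr (Or.inr ?_)))
        show DD w = DD wm2
        refine DD_eq hwW hwm2W ⟨1, one_mem _, ?_⟩
        rw [one_apply', hwm2θ, hre, rigid_bot hr hd]
      · refine Or.inr (Or.inr (Or.inr (Or.inl ?_)))
        show DD w = DD wm1
        obtain ⟨h, hH, hhE⟩ := orbitm1 hr hd
        exact DD_eq hwW hwm1W ⟨h, hH, by rw [hwm1θ, hhE, hre]⟩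
      · refine Or.inr (Or.inr (Or.inl ?_))
        show DD w = DD w0
        obtain ⟨h, hH, hhE⟩ := orbit0 hr hd
        exact DD_eq hwW hw0W ⟨h, hH, by rw [hw0θ, hhE, hre]⟩
      · refine Or.inr (Or.inl ?_)
        show DD w = DD w1
        obtain ⟨h, hH, hhE⟩ := orbit1 hr hd
        exact DD_eq hwW hw1W ⟨h, hH, by rw [hw1θ, hhE, hre]⟩
      · refine Or.inl ?_
        show DD w = DD 1
        refine DD_eq hwW (one_mem _) ⟨1, one_mem _, ?_⟩
        rw [one_apply', one_apply', hre, rigid_top hr hd, theta_eq]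
    · rintro (rfl | rfl | rfl | rfl | rfl)
      · exact ⟨1, one_mem _, rfl⟩
      · exact ⟨w1, hw1W, rfl⟩
      · exact ⟨w0, hw0W, rfl⟩
      · exact ⟨wm1, hwm1W, rfl⟩
      · exact ⟨wm2, hwm2W, rfl⟩
  rw [main]
  have hne : ∀ {u v : E8Space ≃ₗ[ℝ] E8Space},
      ⟪thetaE8, u thetaE8⟫ ≠ ⟪thetaE8, v thetaE8⟫ → DD u ≠ DD v := by
    intro u v hval heq
    exact hval (DD_val (heq ▸ mem_DD_self u))
  have d12 : DD 1 ≠ DD w1 := hne (by rw [val_one, hval1]; norm_num)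
  have d13 : DD 1 ≠ DD w0 := hne (by rw [val_one, hval0]; norm_num)
  have d14 : DD 1 ≠ DD wm1 := hne (by rw [val_one, hvalm1]; norm_num)
  have d15 : DD 1 ≠ DD wm2 := hne (by rw [val_one, hvalm2]; norm_num)
  have d23 : DD w1 ≠ DD w0 := hne (by rw [hval1, hval0]; norm_num)
  have d24 : DD w1 ≠ DD wm1 := hne (by rw [hval1, hvalm1]; norm_num)
  have d25 : DD w1 ≠ DD wm2 := hne (by rw [hval1, hvalm2]; norm_num)
  have d34 : DD w0 ≠ DD wm1 := hne (by rw [hval0, hvalm1]; norm_num)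
  have d35 : DD w0 ≠ DD wm2 := hne (by rw [hval0, hvalm2]; norm_num)
  have d45 : DD wm1 ≠ DD wm2 := hne (by rw [hvalm1, hvalm2]; norm_num)
  rw [Set.ncard_insert_of_notMem (by simp [d12, d13, d14, d15])
      ((Set.finite_singleton _).insert _ |>.insert _ |>.insert _),
    Set.ncard_insert_of_notMem (by simp [d23, d24, d25])
      ((Set.finite_singleton _).insert _ |>.insert _),
    Set.ncard_insert_of_notMem (by simp [d34, d35]) ((Set.finite_singleton _).insert _),
    Set.ncard_insert_of_notMem (by simp [d45]) (Set.finite_singleton _),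
    Set.ncard_singleton]
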